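/- arXiv:1505.07141 — 2 statements merged into one kernel-verified Lean document; each statement's English description precedes it below -/
import Mathlib

section
/- The point P = (-2, 1) on the elliptic curve E : y^2 = x^3 + 5x^2 + 6x + 1 over ℚ has infinite order in E(ℚ). -/
/-- The elliptic curve `E : y² = x³ + 5x² + 6x + 1` over `ℚ`. -/
def E : WeierstrassCurve.Affine ℚ :=
  { a₁ := 0, a₂ := 5, a₃ := 0, a₄ := 6, a₆ := 1 }

/-- Naive height of a rational number. -/
def Hq (q : ℚ) : ℤ := max |q.num| (q.den : ℤ)

lemma one_le_Hq (q : ℚ) : 1 ≤ Hq q :=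
  le_max_of_le_right (by exact_mod_cast q.pos)

lemma noroot (x : ℚ) : x^3 + 5*x^2 + 6*x + 1 ≠ 0 := by
  intro hx
  set n : ℤ := x.num with hn
  set d : ℤ := (x.den : ℤ) with hd
  have hd0 : (0:ℤ) < d := by rw [hd]; exact_mod_cast x.pos
  have hdq : ((d:ℚ)) ≠ 0 := by positivity
  have hxe : x = (n:ℚ)/(d:ℚ) := by rw [hn, hd]; push_cast; exact (Rat.num_div_den x).symm
  rw [hxe] at hx
  field_simp at hx
  have hZ0 : (n^3*d^2+5*n^2*d^3)*d + 6*n*(d^3*d^2) + d^3*d^2*d = 0 := by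
    have hx' : n * (n * (n + d * 5) + d ^ 2 * 6) + d ^ 3 = d ^ 3 * 0 := by exact_mod_cast hx
    linear_combination d^3 * hx'
  have h3 : d^3 * (n^3+5*n^2*d+6*n*d^2+d^3) = 0 := by linear_combination hZ0
  have hZ : n^3 + 5*n^2*d + 6*n*d^2 + d^3 = 0 :=
    (mul_eq_zero.mp h3).resolve_left (pow_ne_zero 3 (by omega))
  have hco : IsCoprime n d := by
    rw [Int.isCoprime_iff_gcd_eq_one]; exact_mod_cast x.reduced
  have hdvd : d ∣ n^3 := ⟨-(5*n^2 + 6*n*d + d^2), by linarith [hZ]⟩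
  have hd1 : d = 1 := by
    have : IsUnit d := (hco.symm.pow_right (n := 3)).isUnit_of_dvd' dvd_rfl hdvd
    rcases Int.isUnit_iff.mp this with h | h
    · exact h
    · omega
  rw [hd1] at hZ
  have hnu : n ∣ 1 := ⟨-(n^2 + 5*n + 6), by linarith [hZ]⟩
  rcases Int.isUnit_iff.mp (isUnit_of_dvd_one hnu) with h | h <;> rw [h] at hZ <;> omega

lemma bound3 (a b H c0 c1 c2 c3 : ℤ) (ha : |a| ≤ H) (hb0 : 0 ≤ b) (hb : b ≤ H) :
    |c0*a^3 + c1*a^2*b + c2*a*b^2 + c3*b^3| ≤ (|c0|+|c1|+|c2|+|c3|) * H^3 := by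
  have hH : 0 ≤ H := le_trans (abs_nonneg a) ha
  have h0 : |c0*a^3| ≤ |c0| *H^3 := by
    rw [abs_mul, abs_pow]; gcongr
  have h1 : |c1*a^2*b| ≤ |c1| *H^3 := by
    rw [abs_mul, abs_mul, abs_pow, abs_of_nonneg hb0]
    calc |c1| *|a|^2*b ≤ |c1| *H^2*H := by gcongr
      _ = |c1| *H^3 := by ring
  have h2 : |c2*a*b^2| ≤ |c2| *H^3 := by
    rw [abs_mul, abs_mul, abs_pow, abs_of_nonneg hb0]
    calc |c2| *|a| *b^2 ≤ |c2| *H*H^2 := by gcongr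
      _ = |c2| *H^3 := by ring
  have h3 : |c3*b^3| ≤ |c3| *H^3 := by
    rw [abs_mul, abs_pow, abs_of_nonneg hb0]; gcongr
  calc |c0*a^3 + c1*a^2*b + c2*a*b^2 + c3*b^3|
      ≤ |c0*a^3 + c1*a^2*b + c2*a*b^2| + |c3*b^3| := abs_add_le _ _
    _ ≤ (|c0*a^3 + c1*a^2*b| + |c2*a*b^2|) + |c3*b^3| := by gcongr; exact abs_add_le _ _
    _ ≤ ((|c0*a^3| + |c1*a^2*b|) + |c2*a*b^2|) + |c3*b^3| := by gcongr; exact abs_add_le _ _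
    _ ≤ (|c0|+|c1|+|c2|+|c3|) * H^3 := by linarith

lemma key (x : ℚ) (hx : 30 ≤ Hq x) :
    Hq x + 1 ≤ Hq ((x^4-12*x^2-8*x+16)/(4*(x^3+5*x^2+6*x+1))) := by
  have hf : x^3+5*x^2+6*x+1 ≠ 0 := noroot x
  set x' : ℚ := (x^4-12*x^2-8*x+16)/(4*(x^3+5*x^2+6*x+1)) with hx'
  set a : ℤ := x.num with ha
  set b : ℤ := (x.den : ℤ) with hb
  set N : ℤ := x'.num with hN
  set D : ℤ := (x'.den : ℤ) with hD
  have hb0 : (0:ℤ) < b := by rw [hb]; exact_mod_cast x.pos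
  have hD0 : (0:ℤ) < D := by rw [hD]; exact_mod_cast x'.pos
  have hbq : ((b:ℚ)) ≠ 0 := by positivity
  have hxe : x = (a:ℚ)/(b:ℚ) := by rw [ha, hb]; push_cast; exact (Rat.num_div_den x).symm
  have hx'ND : x' = (N:ℚ)/(D:ℚ) := by rw [hN, hD]; push_cast; exact (Rat.num_div_den x').symm
  have hcoND : IsCoprime D N := by
    rw [Int.isCoprime_iff_gcd_eq_one, Int.gcd_comm]; exact_mod_cast x'.reduced
  have hcoab : IsCoprime a b := by
    rw [Int.isCoprime_iff_gcd_eq_one]; exact_mod_cast x.reduced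
  have hgoal : Hq x = max |a| b := rfl
  have hgoal' : Hq x' = max |N| D := rfl
  rw [hgoal] at hx
  rw [hgoal, hgoal']
  set A : ℤ := a^4-12*a^2*b^2-8*a*b^3+16*b^4 with hA
  set B : ℤ := 4*a^3*b+20*a^2*b^2+24*a*b^3+4*b^4 with hB
  have hAq : (A:ℚ) = (b:ℚ)^4*(x^4-12*x^2-8*x+16) := by
    rw [hA, hxe]; push_cast; field_simp
  have hBq : (B:ℚ) = 4*(b:ℚ)^4*(x^3+5*x^2+6*x+1) := by
    rw [hB, hxe]; push_cast; field_simp; ring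
  have hB0 : B ≠ 0 := by
    intro h0
    apply hf
    have h1 : (0:ℚ) = 4*(b:ℚ)^4*(x^3+5*x^2+6*x+1) := by rw [← hBq, h0]; norm_num
    have h4 : (4*(b:ℚ)^4) ≠ 0 := by positivity
    rcases mul_eq_zero.mp h1.symm with h | h
    · exact absurd h h4
    · exact h
  have hBq0 : ((B:ℤ):ℚ) ≠ 0 := by exact_mod_cast hB0
  have hx'AB : x' = (A:ℚ)/(B:ℚ) := by
    rw [hx', hAq, hBq]
    rw [show (4*(b:ℚ)^4*(x^3+5*x^2+6*x+1)) = ((b:ℚ)^4)*(4*(x^3+5*x^2+6*x+1)) by ring]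
    rw [mul_div_mul_left _ _ (by positivity : ((b:ℚ)^4) ≠ 0)]
  have hcross : A * D = N * B := by
    have hq : (A:ℚ)/(B:ℚ) = (N:ℚ)/(D:ℚ) := by rw [← hx'AB, hx'ND]
    have h2 := (div_eq_div_iff hBq0 (by positivity : ((D:ℤ):ℚ) ≠ 0)).mp hq
    exact_mod_cast h2
  have hid1 : (0*a^3 + -12*a^2*b + -40*a*b^2 + 4*b^3)*A +
      (3*a^3 + -5*a^2*b + -30*a*b^2 + 33*b^3)*B = 196*b^7 := by rw [hA, hB]; ring
  have hid2 : (49*a^3 + -1024*a^2*b + -1780*a*b^2 + -312*b^3)*A +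
      (256*a^3 + -688*a^2*b + -992*a*b^2 + 1248*b^3)*B = 49*a^7 := by rw [hA, hB]; ring
  -- forget all definitions now
  clear_value A B N D a b x'
  clear hx' hA hB ha hb hN hD hgoal hgoal'
  have hDB : D ∣ B := by
    refine hcoND.dvd_of_dvd_mul_left ⟨A, ?_⟩
    rw [← hcross]; ring
  obtain ⟨t, htB⟩ := hDB
  have ht0 : t ≠ 0 := by rintro rfl; rw [mul_zero] at htB; exact hB0 htB
  have htA : A = N * t := by
    have h2 : A * D = (N * t) * D := by rw [hcross, htB]; ring
    exact mul_right_cancel₀ (by omega) h2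
  have htA' : t ∣ A := Dvd.intro_left N htA.symm
  have htB' : t ∣ B := Dvd.intro_left D htB.symm
  have htdvd1 : t ∣ 196*b^7 := by
    rw [← hid1]; exact dvd_add (htA'.mul_left _) (htB'.mul_left _)
  have htdvd2 : t ∣ 49*a^7 := by
    rw [← hid2]; exact dvd_add (htA'.mul_left _) (htB'.mul_left _)
  have ht196 : t ∣ 196 := by
    obtain ⟨u, v, huv⟩ := (hcoab.pow (m := 7) (n := 7))
    have h196 : (4*u)*(49*a^7) + v*(196*b^7) = 196 := by linear_combination 196*huv
    rw [← h196]; exact dvd_add (htdvd2.mul_left _) (htdvd1.mul_left _)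
  have habst : |t| ≤ 196 := Int.le_of_dvd (by norm_num) ((abs_dvd _ _).mpr ht196)
  set H : ℤ := max |a| b with hH
  have hHa : |a| ≤ H := le_max_left _ _
  have hHb : b ≤ H := le_max_right _ _
  have hH0 : (0:ℤ) < H := by omega
  set M : ℤ := max |A| |B| with hM
  have hMA : |A| ≤ M := le_max_left _ _
  have hMB : |B| ≤ M := le_max_right _ _
  have hM0 : 0 ≤ M := le_trans (abs_nonneg A) hMA
  have hH30 : 30 ≤ H := le_trans hx (by rw [hH])
  clear_value H M
  have hb0' : (0:ℤ) ≤ b := le_of_lt hb0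
  have hM49 : 49*H^4 ≤ 6349*M := by
    rcases le_total b |a| with hc | hc
    · have hHeq : H = |a| := by rw [hH]; exact max_eq_left hc
      have e1 : |49*a^3 + -1024*a^2*b + -1780*a*b^2 + -312*b^3| ≤ 3165 * H^3 := by
        calc |49*a^3 + -1024*a^2*b + -1780*a*b^2 + -312*b^3|
            ≤ (|(49:ℤ)|+|(-1024:ℤ)|+|(-1780:ℤ)|+|(-312:ℤ)|) * H^3 :=
              bound3 a b H 49 (-1024) (-1780) (-312) hHa hb0' hHb
          _ = 3165 * H^3 := by norm_num
      have e2 : |256*a^3 + -688*a^2*b + -992*a*b^2 + 1248*b^3| ≤ 3184 * H^3 := by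
        calc |256*a^3 + -688*a^2*b + -992*a*b^2 + 1248*b^3|
            ≤ (|(256:ℤ)|+|(-688:ℤ)|+|(-992:ℤ)|+|(1248:ℤ)|) * H^3 :=
              bound3 a b H 256 (-688) (-992) 1248 hHa hb0' hHb
          _ = 3184 * H^3 := by norm_num
      have e3 : |49*a^7| ≤ 6349*H^3*M := by
        calc |49*a^7| = |(49*a^3 + -1024*a^2*b + -1780*a*b^2 + -312*b^3)*A +
              (256*a^3 + -688*a^2*b + -992*a*b^2 + 1248*b^3)*B| := by rw [hid2]
          _ ≤ |(49*a^3 + -1024*a^2*b + -1780*a*b^2 + -312*b^3)*A| +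
              |(256*a^3 + -688*a^2*b + -992*a*b^2 + 1248*b^3)*B| := abs_add_le _ _
          _ = |49*a^3 + -1024*a^2*b + -1780*a*b^2 + -312*b^3| * |A| +
              |256*a^3 + -688*a^2*b + -992*a*b^2 + 1248*b^3| * |B| := by
                rw [abs_mul, abs_mul]
          _ ≤ (3165*H^3)*M + (3184*H^3)*M :=
              add_le_add (mul_le_mul e1 hMA (abs_nonneg _) (by positivity))
                (mul_le_mul e2 hMB (abs_nonneg _) (by positivity))
          _ = 6349*H^3*M := by ring
      have e4 : (49*H^4)*H^3 ≤ (6349*M)*H^3 := by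
        have h7 : 49*H^7 = |49*a^7| := by
          rw [abs_mul, abs_pow, ← hHeq]; norm_num
        calc (49*H^4)*H^3 = 49*H^7 := by ring
          _ = |49*a^7| := h7
          _ ≤ 6349*H^3*M := e3
          _ = (6349*M)*H^3 := by ring
      exact le_of_mul_le_mul_right e4 (by positivity)
    · have hHeq : H = b := by rw [hH]; exact max_eq_right hc
      have e1 : |0*a^3 + -12*a^2*b + -40*a*b^2 + 4*b^3| ≤ 56 * H^3 := by
        calc |0*a^3 + -12*a^2*b + -40*a*b^2 + 4*b^3|
            ≤ (|(0:ℤ)|+|(-12:ℤ)|+|(-40:ℤ)|+|(4:ℤ)|) * H^3 :=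
              bound3 a b H 0 (-12) (-40) 4 hHa hb0' hHb
          _ = 56 * H^3 := by norm_num
      have e2 : |3*a^3 + -5*a^2*b + -30*a*b^2 + 33*b^3| ≤ 71 * H^3 := by
        calc |3*a^3 + -5*a^2*b + -30*a*b^2 + 33*b^3|
            ≤ (|(3:ℤ)|+|(-5:ℤ)|+|(-30:ℤ)|+|(33:ℤ)|) * H^3 :=
              bound3 a b H 3 (-5) (-30) 33 hHa hb0' hHb
          _ = 71 * H^3 := by norm_num
      have e3 : |196*b^7| ≤ 127*H^3*M := by
        calc |196*b^7| = |(0*a^3 + -12*a^2*b + -40*a*b^2 + 4*b^3)*A +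
              (3*a^3 + -5*a^2*b + -30*a*b^2 + 33*b^3)*B| := by rw [hid1]
          _ ≤ |(0*a^3 + -12*a^2*b + -40*a*b^2 + 4*b^3)*A| +
              |(3*a^3 + -5*a^2*b + -30*a*b^2 + 33*b^3)*B| := abs_add_le _ _
          _ = |0*a^3 + -12*a^2*b + -40*a*b^2 + 4*b^3| * |A| +
              |3*a^3 + -5*a^2*b + -30*a*b^2 + 33*b^3| * |B| := by rw [abs_mul, abs_mul]
          _ ≤ (56*H^3)*M + (71*H^3)*M :=
              add_le_add (mul_le_mul e1 hMA (abs_nonneg _) (by positivity))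
                (mul_le_mul e2 hMB (abs_nonneg _) (by positivity))
          _ = 127*H^3*M := by ring
      have e4 : (196*H^4)*H^3 ≤ (127*M)*H^3 := by
        have h7 : 196*H^7 = |196*b^7| := by
          rw [abs_mul, abs_pow, abs_of_nonneg hb0', ← hHeq]; norm_num
        calc (196*H^4)*H^3 = 196*H^7 := by ring
          _ = |196*b^7| := h7
          _ ≤ 127*H^3*M := e3
          _ = (127*M)*H^3 := by ring
      have e5 := le_of_mul_le_mul_right e4 (by positivity : (0:ℤ) < H^3)
      nlinarith [hM0]
  have hMt : M ≤ 196 * max |N| D := by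
    have hAbs : |A| = |N| * |t| := by rw [htA, abs_mul]
    have hBabs : |B| = D * |t| := by rw [htB, abs_mul, abs_of_nonneg (le_of_lt hD0)]
    have h1 : |A| ≤ 196 * max |N| D := by
      rw [hAbs]
      calc |N| * |t| ≤ max |N| D * 196 :=
            mul_le_mul (le_max_left _ _) habst (abs_nonneg _)
              (le_trans (abs_nonneg N) (le_max_left _ _))
        _ = 196 * max |N| D := by ring
    have h2 : |B| ≤ 196 * max |N| D := by
      rw [hBabs]
      calc D * |t| ≤ max |N| D * 196 :=
            mul_le_mul (le_max_right _ _) habst (abs_nonneg _)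
              (le_trans (abs_nonneg N) (le_max_left _ _))
        _ = 196 * max |N| D := by ring
    rw [hM]; exact max_le h1 h2
  have hfinal : 49*H^4 ≤ 1244404 * max |N| D := by
    calc 49*H^4 ≤ 6349*M := hM49
      _ ≤ 6349*(196 * max |N| D) := by linarith
      _ = 1244404 * max |N| D := by ring
  have h27 : (30:ℤ)^3 ≤ H^3 := by gcongr <;> norm_num
  have hstep : 1323000*H ≤ 49*H^4 := by nlinarith [h27, hH0]
  linarith [hfinal, hstep, hH30, h27]

@[simp] lemma Ea1 : E.a₁ = 0 := rfl
@[simp] lemma Ea2 : E.a₂ = 5 := rfl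
@[simp] lemma Ea3 : E.a₃ = 0 := rfl
@[simp] lemma Ea4 : E.a₄ = 6 := rfl
@[simp] lemma Ea6 : E.a₆ = 1 := rfl

open WeierstrassCurve.Affine

lemma eqn_of_ns {x y : ℚ} (h : E.Nonsingular x y) : y^2 = x^3 + 5*x^2 + 6*x + 1 := by
  have heq := h.1
  rw [WeierstrassCurve.Affine.equation_iff] at heq
  simp only [Ea1, Ea2, Ea3, Ea4, Ea6] at heq
  linear_combination heq

lemma negY_eq (x y : ℚ) : E.negY x y = -y := by
  simp [WeierstrassCurve.Affine.negY]

lemma double {x y : ℚ} (h : E.Nonsingular x y) :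
    ∃ (x' y' : ℚ) (h' : E.Nonsingular x' y'),
      (2 : ℕ) • (Point.some _ _ h) = .some _ _ h' ∧
      x' = (x^4-12*x^2-8*x+16)/(4*(x^3+5*x^2+6*x+1)) := by
  have heq : y^2 = x^3 + 5*x^2 + 6*x + 1 := eqn_of_ns h
  have hf : x^3 + 5*x^2 + 6*x + 1 ≠ 0 := noroot x
  have hy0 : y ≠ 0 := by
    intro h0; apply noroot x; rw [← heq, h0]; ring
  have hy : y ≠ E.negY x y := by
    rw [negY_eq]
    intro hc; apply hy0; linarith
  refine ⟨E.addX x x (E.slope x x y y), E.addY x x y (E.slope x x y y),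
    WeierstrassCurve.Affine.nonsingular_add h h (fun hxy => hy hxy.right), ?_, ?_⟩
  · rw [two_nsmul]; exact Point.add_self_of_Y_ne hy
  · have hslope : E.slope x x y y = (3*x^2+10*x+6)/(2*y) := by
      rw [WeierstrassCurve.Affine.slope_of_Y_ne rfl hy, negY_eq]
      simp only [Ea1, Ea2, Ea4]
      rw [show y - -y = 2*y by ring]
      ring_nf
    have hL2 : ((3*x^2+10*x+6)/(2*y))^2 = (3*x^2+10*x+6)^2/(4*(x^3+5*x^2+6*x+1)) := by
      rw [div_pow, mul_pow, heq]
      norm_num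
    rw [WeierstrassCurve.Affine.addX, hslope, hL2]
    simp only [Ea1, Ea2]
    rw [zero_mul, add_zero, eq_div_iff (mul_ne_zero four_ne_zero hf), sub_mul, sub_mul, sub_mul,
      div_mul_cancel₀ _ (mul_ne_zero four_ne_zero hf)]
    ring

lemma iterate_double {x y : ℚ} (h : E.Nonsingular x y) (hx : 30 ≤ Hq x) (k : ℕ) :
    ∃ (x' y' : ℚ) (h' : E.Nonsingular x' y'),
      ((2:ℕ)^k) • (Point.some _ _ h) = .some _ _ h' ∧ 30 ≤ Hq x' ∧ Hq x + k ≤ Hq x' := by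
  induction k with
  | zero => exact ⟨x, y, h, by simp, hx, by simp⟩
  | succ n ih =>
    obtain ⟨x1, y1, h1, he, h30, hge⟩ := ih
    obtain ⟨x2, y2, h2, he2, hx2⟩ := double h1
    have hkey := key x1 h30
    rw [← hx2] at hkey
    refine ⟨x2, y2, h2, ?_, by linarith, ?_⟩
    · rw [pow_succ', mul_smul, he, he2]
    · push_cast
      push_cast at hge
      linarith


/-- The point `P = (-2, 1)` on `E : y² = x³ + 5x² + 6x + 1` has infinite order in `E(ℚ)`. -/

theorem P_infinite_order (h : E.Nonsingular (-2) 1) :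
    ¬ IsOfFinAddOrder (WeierstrassCurve.Affine.Point.some (-2) 1 h) := by
  intro hfin
  -- compute 8P = (12/169, _)
  obtain ⟨x1, y1, h1, e1, hx1⟩ := double h
  norm_num at hx1
  subst hx1
  obtain ⟨x2, y2, h2, e2, hx2⟩ := double h1
  norm_num at hx2
  subst hx2
  obtain ⟨x3, y3, h3, e3, hx3⟩ := double h2
  norm_num at hx3
  subst hx3
  have h169 : 30 ≤ Hq (12/169 : ℚ) := by norm_num [Hq]
  have e8 : ((2:ℕ)^3) • Point.some _ _ h = Point.some _ _ h3 := by
    have : ((2:ℕ)^3) = 2*(2*2) := by norm_num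
    rw [this, mul_smul, mul_smul, e1, e2, e3]
  -- torsion order
  set n := addOrderOf (Point.some _ _ h) with hn
  have hn0 : 0 < n := hfin.addOrderOf_pos
  have hnsmul : n • (Point.some _ _ h) = 0 := addOrderOf_nsmul_eq_zero _
  -- pigeonhole
  obtain ⟨i, j, hne, hfij⟩ := Finite.exists_ne_map_eq_of_infinite
    (f := fun i : ℕ => (⟨2^i % n, Nat.mod_lt _ hn0⟩ : Fin n))
  have hmodeq : ∀ (i j : ℕ), i < j → 2^i % n = 2^j % n →
      ((2:ℕ)^(j+3)) • Point.some _ _ h = ((2:ℕ)^(i+3)) • Point.some _ _ h := by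
    intro i j hij hmod
    have hle : (2:ℕ)^i ≤ 2^j := Nat.pow_le_pow_right (by norm_num) hij.le
    have hd : n ∣ 2^j - 2^i := (Nat.modEq_iff_dvd' hle).mp hmod
    obtain ⟨c, hc⟩ := hd
    have hexp : (2:ℕ)^(j+3) = 2^(i+3) + ((8*c)*n) := by
      rw [pow_add, pow_add]
      have : (2:ℕ)^j = 2^i + n*c := by omega
      rw [this]; ring
    rw [hexp, add_nsmul, mul_smul, hnsmul, nsmul_zero, add_zero]
  have comb : ∀ k : ℕ, ((2:ℕ)^(k+3)) • Point.some _ _ h = ((2:ℕ)^k) • Point.some _ _ h3 := by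
    intro k
    rw [pow_add, mul_smul, e8]
  have claim : ∀ I J : ℕ, I < J →
      ((2:ℕ)^(J+3)) • Point.some _ _ h = ((2:ℕ)^(I+3)) • Point.some _ _ h → False := by
    intro I J hIJ hpoint
    obtain ⟨xi, yi, hi, ei, h30i, hgei⟩ := iterate_double h3 h169 I
    obtain ⟨xj, yj, hj, ej, h30j, hgej⟩ := iterate_double hi h30i (J - I)
    have hsame : Point.some _ _ hj = Point.some _ _ hi := by
      calc Point.some _ _ hj = ((2:ℕ)^(J-I)) • Point.some _ _ hi := ej.symm
        _ = ((2:ℕ)^(J-I)) • (((2:ℕ)^I) • Point.some _ _ h3) := by rw [ei]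
        _ = (((2:ℕ)^(J-I)) * ((2:ℕ)^I)) • Point.some _ _ h3 := (mul_smul _ _ _).symm
        _ = ((2:ℕ)^(J-I+I)) • Point.some _ _ h3 := by rw [pow_add]
        _ = ((2:ℕ)^J) • Point.some _ _ h3 := by rw [Nat.sub_add_cancel hIJ.le]
        _ = ((2:ℕ)^(J+3)) • Point.some _ _ h := (comb J).symm
        _ = ((2:ℕ)^(I+3)) • Point.some _ _ h := hpoint
        _ = ((2:ℕ)^I) • Point.some _ _ h3 := comb I
        _ = Point.some _ _ hi := ei
    injection hsame with hxx hyy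
    rw [hxx] at hgej
    have h1JI : (1:ℤ) ≤ ((J - I : ℕ) : ℤ) := by
      have : 1 ≤ J - I := by omega
      exact_mod_cast this
    linarith
  have hmod' : 2^i % n = 2^j % n := by
    have := Fin.mk.injEq .. ▸ hfij
    simpa using hfij
  rcases Ne.lt_or_gt hne with hij | hij
  · exact claim i j hij (hmodeq i j hij hmod')
  · exact claim j i hij (hmodeq j i hij hmod'.symm)
end

section
/- If p and q are distinct odd primes ≥ 5, then the elliptic curves E_p : y^2 = x(x+p+1)(x-p+1) and E_q : y^2 = x(x+q+1)(x-q+1) have distinct j-invariants, hence are not geometrically isomorphic. -/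
/-- The elliptic curve `E_p : y² = x(x + p + 1)(x - p + 1) = x³ + 2x² + (1 - p²)x` over `ℚ`. -/
def Ep (p : ℕ) : WeierstrassCurve.Affine ℚ :=
  { a₁ := 0, a₂ := 2, a₃ := 0, a₄ := 1 - (p : ℚ) ^ 2, a₆ := 0 }

lemma Ep_c₄ (p : ℕ) : (Ep p).c₄ = 16 + 48 * p ^ 2 := by
  simp [WeierstrassCurve.c₄, WeierstrassCurve.b₂, WeierstrassCurve.b₄, Ep]; ring

lemma Ep_Δ (p : ℕ) : (Ep p).Δ = 64 * p ^ 2 * ((p : ℚ) ^ 2 - 1) ^ 2 := by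
  simp [WeierstrassCurve.Δ, WeierstrassCurve.b₂, WeierstrassCurve.b₄,
    WeierstrassCurve.b₆, WeierstrassCurve.b₈, Ep]; ring

lemma Ep_j (p : ℕ) (h5 : 5 ≤ p) (hE : (Ep p).IsElliptic) :
    (Ep p).j = (64 * (1 + 3 * (p : ℚ) ^ 2) ^ 3) / ((p : ℚ) ^ 2 * ((p : ℚ) ^ 2 - 1) ^ 2) := by
  have h1 : (Ep p).j = ((Ep p).Δ)⁻¹ * (Ep p).c₄ ^ 3 := by
    rw [WeierstrassCurve.j, ← WeierstrassCurve.coe_Δ']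
    norm_cast
  have hp5 : (5 : ℚ) ≤ (p : ℚ) := by exact_mod_cast h5
  have hp0 : (p : ℚ) ≠ 0 := by positivity
  have hp1 : (p : ℚ) ^ 2 - 1 ≠ 0 := by nlinarith
  rw [h1, Ep_c₄, Ep_Δ]
  field_simp
  ring

/-- Key arithmetic lemma: cross-multiplied equality is impossible for `q < p`. -/
lemma key_s17 (p q : ℕ) (hp : p.Prime) (hop : Odd p) (hoq : Odd q) (h5q : 5 ≤ q) (hlt : q < p)
    (h : 64 * (1 + 3 * p ^ 2) ^ 3 * (q ^ 2 * (q ^ 2 - 1) ^ 2)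
       = 64 * (1 + 3 * q ^ 2) ^ 3 * (p ^ 2 * (p ^ 2 - 1) ^ 2)) : False := by
  have h5p : 5 ≤ p := by omega
  have hdvd : p ∣ 64 * (1 + 3 * p ^ 2) ^ 3 * (q ^ 2 * (q ^ 2 - 1) ^ 2) := by
    rw [h]
    exact ⟨64 * (1 + 3 * q ^ 2) ^ 3 * (p * (p ^ 2 - 1) ^ 2), by ring⟩
  rcases (Nat.Prime.dvd_mul hp).mp hdvd with h1 | h2
  · rcases (Nat.Prime.dvd_mul hp).mp h1 with h64 | hcu
    · have : p ∣ 2 := hp.dvd_of_dvd_pow (n := 6) (by norm_num at h64 ⊢; exact h64)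
      have := Nat.le_of_dvd (by norm_num) this
      omega
    · have hd : p ∣ 1 + 3 * p ^ 2 := hp.dvd_of_dvd_pow hcu
      have hd2 : p ∣ 3 * p ^ 2 := ⟨3 * p, by ring⟩
      have : p ∣ 1 := by
        have := Nat.dvd_sub hd hd2
        simpa using this
      have := Nat.le_of_dvd one_pos this
      omega
  · rcases (Nat.Prime.dvd_mul hp).mp h2 with hq2 | hq1
    · have : p ∣ q := hp.dvd_of_dvd_pow hq2
      have := Nat.le_of_dvd (by omega) this
      omega
    · have hd : p ∣ q ^ 2 - 1 := hp.dvd_of_dvd_pow hq1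
      obtain ⟨k, rfl⟩ : ∃ k, q = k + 1 := ⟨q - 1, by omega⟩
      have hfac : (k + 1) ^ 2 - 1 = k * (k + 2) := by ring_nf; omega
      rw [hfac] at hd
      rcases (Nat.Prime.dvd_mul hp).mp hd with hk | hk2
      · have := Nat.le_of_dvd (by omega) hk
        omega
      · have := Nat.le_of_dvd (by omega) hk2
        obtain ⟨a, ha⟩ := hop
        obtain ⟨b, hb⟩ := hoq
        -- p ≤ k + 2 = q + 1, q < p, p odd, q odd ⟹ p = q + 1 even, contradiction
        omega

lemma main (p q : ℕ) (hp : p.Prime) (hop : Odd p) (hoq : Odd q)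
    (h5p : 5 ≤ p) (h5q : 5 ≤ q) (hlt : q < p)
    (hEp : (Ep p).IsElliptic) (hEq : (Ep q).IsElliptic) :
    (Ep p).j ≠ (Ep q).j := by
  intro hj
  rw [Ep_j p h5p hEp, Ep_j q h5q hEq] at hj
  have hqp5 : (5 : ℚ) ≤ (p : ℚ) := by exact_mod_cast h5p
  have hqq5 : (5 : ℚ) ≤ (q : ℚ) := by exact_mod_cast h5q
  have hdp : (p : ℚ) ^ 2 * ((p : ℚ) ^ 2 - 1) ^ 2 ≠ 0 := by
    have : (p : ℚ) ^ 2 - 1 ≠ 0 := by nlinarith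
    positivity
  have hdq : (q : ℚ) ^ 2 * ((q : ℚ) ^ 2 - 1) ^ 2 ≠ 0 := by
    have : (q : ℚ) ^ 2 - 1 ≠ 0 := by nlinarith
    positivity
  rw [div_eq_div_iff hdp hdq] at hj
  have hcp : ((p : ℚ) ^ 2 - 1) = ((p ^ 2 - 1 : ℕ) : ℚ) := by
    rw [Nat.cast_sub (by nlinarith : 1 ≤ p ^ 2)]; push_cast; ring
  have hcq : ((q : ℚ) ^ 2 - 1) = ((q ^ 2 - 1 : ℕ) : ℚ) := by
    rw [Nat.cast_sub (by nlinarith : 1 ≤ q ^ 2)]; push_cast; ring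
  rw [hcp, hcq] at hj
  have hnat : 64 * (1 + 3 * p ^ 2) ^ 3 * (q ^ 2 * (q ^ 2 - 1) ^ 2)
      = 64 * (1 + 3 * q ^ 2) ^ 3 * (p ^ 2 * (p ^ 2 - 1) ^ 2) := by
    exact_mod_cast hj
  exact key_s17 p q hp hop hoq h5q hlt hnat

/-- If `p` and `q` are distinct odd primes `≥ 5`, then `E_p` and `E_q` have distinct
`j`-invariants, hence are not geometrically isomorphic. -/
theorem j_distinct (p q : ℕ) (hp : p.Prime) (hq : q.Prime)
    (hop : Odd p) (hoq : Odd q) (h5p : 5 ≤ p) (h5q : 5 ≤ q) (hne : p ≠ q)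
    (hEp : (Ep p).IsElliptic) (hEq : (Ep q).IsElliptic) :
    (Ep p).j ≠ (Ep q).j := by
  rcases hne.lt_or_gt with h | h
  · exact fun hj => main q p hq hoq hop h5q h5p h hEq hEp hj.symm
  · exact main p q hp hop hoq h5p h5q h hEp hEq
end
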